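/- Let λ, μ, ρ > 0 with μ ≤ √(λρ/2), and R > 0. Consider f(x,y) = -(λ/2)x² + μxy - (ρ/2)y² and the primal function φ(x) = max_{|y| ≤ R} f(x,y). Then for all |x| ≤ ρR/μ one has φ(x) = ((μ²/ρ - λ)/2)·x², and the proximal point x⁺(x) of φ with stepsize 1/(2λ) (over ℝ) equals 2λρx/(λρ + μ²) whenever 2λρ|x|/(λρ+μ²) ≤ ρR/μ; moreover, at x* = μR/λ the Moreau-envelope derivative satisfies -φ'_{2λ}(x*) = 2λ·(μR/λ)·(λρ - μ²)/(λρ + μ²) ≥ (2/3)μR. -/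

import Mathlib

/-- Computation in the proof of Proposition 4.2(1) for the weakly-coupled quadratic example. -/
lemma aux_ub (lam mu rho : ℝ) (hrho : 0 < rho) (x y : ℝ) :
    -(lam / 2) * x ^ 2 + mu * x * y - rho / 2 * y ^ 2 ≤ (mu ^ 2 / rho - lam) / 2 * x ^ 2 := by
  have h := sq_nonneg (mu * x - rho * y)
  have h2 : (mu ^ 2 / rho - lam) / 2 * x ^ 2 - (-(lam / 2) * x ^ 2 + mu * x * y - rho / 2 * y ^ 2)
      = (mu * x - rho * y) ^ 2 / (2 * rho) := by field_simp; ring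
  nlinarith [div_nonneg h (le_of_lt (by linarith : (0:ℝ) < 2 * rho))]

lemma aux_bdd (lam mu rho R : ℝ) (hrho : 0 < rho) (x : ℝ) :
    BddAbove ((fun y => -(lam / 2) * x ^ 2 + mu * x * y - rho / 2 * y ^ 2) '' Set.Icc (-R) R) := by
  refine ⟨(mu ^ 2 / rho - lam) / 2 * x ^ 2, ?_⟩
  rintro v ⟨y, -, rfl⟩
  exact aux_ub lam mu rho hrho x y

lemma aux_greatest (lam mu rho R : ℝ) (hmu : 0 < mu) (hrho : 0 < rho)
    (x : ℝ) (hx : |x| ≤ rho * R / mu) :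
    IsGreatest ((fun y => -(lam / 2) * x ^ 2 + mu * x * y - rho / 2 * y ^ 2) '' Set.Icc (-R) R)
      ((mu ^ 2 / rho - lam) / 2 * x ^ 2) := by
  constructor
  · refine ⟨mu * x / rho, ?_, by field_simp; ring⟩
    have hx' : |x| * mu ≤ rho * R := (le_div_iff₀ hmu).mp hx
    have habs : |mu * x / rho| ≤ R := by
      rw [abs_div, abs_mul, abs_of_pos hmu, abs_of_pos hrho, div_le_iff₀ hrho]
      nlinarith [abs_nonneg x]
    exact Set.mem_Icc.mpr (abs_le.mp habs)
  · rintro v ⟨y, -, rfl⟩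
    exact aux_ub lam mu rho hrho x y

lemma aux_identity (lam mu rho x u : ℝ) (hlam : 0 < lam) (hmu : 0 < mu) (hrho : 0 < rho) :
    (-(lam / 2) * u ^ 2 + mu * u * (2 * lam * mu * x / (lam * rho + mu ^ 2))
        - rho / 2 * (2 * lam * mu * x / (lam * rho + mu ^ 2)) ^ 2) + lam * (u - x) ^ 2
    = (mu ^ 2 / rho - lam) / 2 * (2 * lam * rho * x / (lam * rho + mu ^ 2)) ^ 2
        + lam * (2 * lam * rho * x / (lam * rho + mu ^ 2) - x) ^ 2
        + lam / 2 * (u - 2 * lam * rho * x / (lam * rho + mu ^ 2)) ^ 2 := by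
  have hs : lam * rho + mu ^ 2 ≠ 0 := by positivity
  field_simp
  ring

-- |u*| rewrite
lemma aux_absu (lam mu rho x : ℝ) (hlam : 0 < lam) (hmu : 0 < mu) (hrho : 0 < rho) :
    |2 * lam * rho * x / (lam * rho + mu ^ 2)| = 2 * lam * rho * |x| / (lam * rho + mu ^ 2) := by
  have hs : (0:ℝ) < lam * rho + mu ^ 2 := by positivity
  rw [abs_div, abs_mul, abs_of_pos hs, abs_of_pos (by positivity : (0:ℝ) < 2 * lam * rho)]

-- y* ∈ Icc
lemma aux_ymem (lam mu rho R x : ℝ) (hlam : 0 < lam) (hmu : 0 < mu) (hrho : 0 < rho)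
    (hx : 2 * lam * rho * |x| / (lam * rho + mu ^ 2) ≤ rho * R / mu) :
    2 * lam * mu * x / (lam * rho + mu ^ 2) ∈ Set.Icc (-R) R := by
  have hs : (0:ℝ) < lam * rho + mu ^ 2 := by positivity
  have habs : |2 * lam * mu * x / (lam * rho + mu ^ 2)| ≤ R := by
    rw [abs_div, abs_mul, abs_of_pos hs, abs_of_pos (by positivity : (0:ℝ) < 2 * lam * mu),
      div_le_iff₀ hs]
    rw [div_le_div_iff₀ hs hmu] at hx
    nlinarith [abs_nonneg x]
  exact Set.mem_Icc.mpr (abs_le.mp habs)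

-- core: value at u* is a lower bound of the prox objective, and φ(u*) is the quadratic
lemma aux_lb (lam mu rho R x : ℝ) (hlam : 0 < lam) (hmu : 0 < mu) (hrho : 0 < rho)
    (hx : 2 * lam * rho * |x| / (lam * rho + mu ^ 2) ≤ rho * R / mu) (u : ℝ) :
    (mu ^ 2 / rho - lam) / 2 * (2 * lam * rho * x / (lam * rho + mu ^ 2)) ^ 2
      + lam * (2 * lam * rho * x / (lam * rho + mu ^ 2) - x) ^ 2
    ≤ sSup ((fun y => -(lam / 2) * u ^ 2 + mu * u * y - rho / 2 * y ^ 2) '' Set.Icc (-R) R)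
      + lam * (u - x) ^ 2 := by
  set ys := 2 * lam * mu * x / (lam * rho + mu ^ 2) with hys
  have hmem : ys ∈ Set.Icc (-R) R := aux_ymem lam mu rho R x hlam hmu hrho hx
  have h1 : -(lam / 2) * u ^ 2 + mu * u * ys - rho / 2 * ys ^ 2
      ≤ sSup ((fun y => -(lam / 2) * u ^ 2 + mu * u * y - rho / 2 * y ^ 2) '' Set.Icc (-R) R) :=
    le_csSup (aux_bdd lam mu rho R hrho u) ⟨ys, hmem, rfl⟩
  have h2 := aux_identity lam mu rho x u hlam hmu hrho
  nlinarith [sq_nonneg (u - 2 * lam * rho * x / (lam * rho + mu ^ 2))]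

lemma aux_env (lam mu rho R x : ℝ) (hlam : 0 < lam) (hmu : 0 < mu) (hrho : 0 < rho)
    (hx : 2 * lam * rho * |x| / (lam * rho + mu ^ 2) ≤ rho * R / mu) :
    sInf (Set.range fun u =>
        sSup ((fun y => -(lam / 2) * u ^ 2 + mu * u * y - rho / 2 * y ^ 2) '' Set.Icc (-R) R)
          + lam * (u - x) ^ 2)
      = -(lam * (lam * rho - mu ^ 2)) / (lam * rho + mu ^ 2) * x ^ 2 := by
  have hs : (0:ℝ) < lam * rho + mu ^ 2 := by positivity
  set us := 2 * lam * rho * x / (lam * rho + mu ^ 2) with hus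
  have husabs : |us| ≤ rho * R / mu := by rw [hus, aux_absu lam mu rho x hlam hmu hrho]; exact hx
  have hφus : sSup ((fun y => -(lam / 2) * us ^ 2 + mu * us * y - rho / 2 * y ^ 2) '' Set.Icc (-R) R)
      = (mu ^ 2 / rho - lam) / 2 * us ^ 2 :=
    (aux_greatest lam mu rho R hmu hrho us husabs).csSup_eq
  have hK : (mu ^ 2 / rho - lam) / 2 * us ^ 2 + lam * (us - x) ^ 2
      = -(lam * (lam * rho - mu ^ 2)) / (lam * rho + mu ^ 2) * x ^ 2 := by
    rw [hus]; field_simp; ring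
  apply IsLeast.csInf_eq
  constructor
  · exact ⟨us, by simp only []; rw [hφus, hK]⟩
  · rintro v ⟨u, rfl⟩
    rw [← hK]
    exact aux_lb lam mu rho R x hlam hmu hrho hx u

theorem stmt17 (lam mu rho R : ℝ) (hlam : 0 < lam) (hmu : 0 < mu) (hrho : 0 < rho)
    (hR : 0 < R) (hcoup : mu ≤ Real.sqrt (lam * rho / 2)) :
    let φ : ℝ → ℝ := fun x =>
      sSup ((fun y => -(lam / 2) * x ^ 2 + mu * x * y - rho / 2 * y ^ 2) '' Set.Icc (-R) R)
    (∀ x : ℝ, |x| ≤ rho * R / mu → φ x = (mu ^ 2 / rho - lam) / 2 * x ^ 2) ∧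
    (∀ x : ℝ, 2 * lam * rho * |x| / (lam * rho + mu ^ 2) ≤ rho * R / mu →
      ∀ u : ℝ, φ (2 * lam * rho * x / (lam * rho + mu ^ 2))
          + lam * (2 * lam * rho * x / (lam * rho + mu ^ 2) - x) ^ 2
        ≤ φ u + lam * (u - x) ^ 2) ∧
    (∃ d : ℝ,
      HasDerivAt (fun x => sInf (Set.range fun u => φ u + lam * (u - x) ^ 2)) d (mu * R / lam) ∧
      -d = 2 * mu * R * (lam * rho - mu ^ 2) / (lam * rho + mu ^ 2) ∧
      2 / 3 * (mu * R) ≤ -d) := by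
  have hs : (0:ℝ) < lam * rho + mu ^ 2 := by positivity
  have hmu2 : mu ^ 2 ≤ lam * rho / 2 := by
    have h1 := Real.sq_sqrt (show (0:ℝ) ≤ lam * rho / 2 by positivity)
    nlinarith [Real.sqrt_nonneg (lam * rho / 2)]
  intro φ
  refine ⟨?_, ?_, ?_⟩
  · intro x hx
    exact (aux_greatest lam mu rho R hmu hrho x hx).csSup_eq
  · intro x hx u
    have h1 := aux_lb lam mu rho R x hlam hmu hrho hx u
    have husabs : |2 * lam * rho * x / (lam * rho + mu ^ 2)| ≤ rho * R / mu := by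
      rw [aux_absu lam mu rho x hlam hmu hrho]; exact hx
    have h2 : φ (2 * lam * rho * x / (lam * rho + mu ^ 2))
        = (mu ^ 2 / rho - lam) / 2 * (2 * lam * rho * x / (lam * rho + mu ^ 2)) ^ 2 :=
      (aux_greatest lam mu rho R hmu hrho _ husabs).csSup_eq
    rw [h2]
    exact h1
  · set xs := mu * R / lam with hxs
    refine ⟨-(lam * (lam * rho - mu ^ 2)) / (lam * rho + mu ^ 2) * (2 * xs), ?_, ?_, ?_⟩
    · have hball : ∀ᶠ x in nhds xs, 2 * lam * rho * |x| / (lam * rho + mu ^ 2) ≤ rho * R / mu := by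
        have hcont : ContinuousAt (fun x : ℝ => 2 * lam * rho * |x| / (lam * rho + mu ^ 2)) xs := by
          fun_prop
        have hlt : 2 * lam * rho * |xs| / (lam * rho + mu ^ 2) < rho * R / mu := by
          rw [hxs, abs_of_pos (by positivity), div_lt_div_iff₀ hs hmu]
          have : 0 < lam * rho - mu ^ 2 := by nlinarith
          field_simp
          nlinarith [mul_pos (mul_pos (mul_pos hlam hrho) hR) this]
        filter_upwards [hcont.eventually_lt continuousAt_const hlt] with x hx using hx.le
      have heq : (fun x => sInf (Set.range fun u => φ u + lam * (u - x) ^ 2))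
          =ᶠ[nhds xs] fun x => -(lam * (lam * rho - mu ^ 2)) / (lam * rho + mu ^ 2) * x ^ 2 := by
        filter_upwards [hball] with x hx
        exact aux_env lam mu rho R x hlam hmu hrho hx
      have hder : HasDerivAt (fun x : ℝ => -(lam * (lam * rho - mu ^ 2)) / (lam * rho + mu ^ 2) * x ^ 2)
          (-(lam * (lam * rho - mu ^ 2)) / (lam * rho + mu ^ 2) * (2 * xs)) xs := by
        have := (hasDerivAt_pow 2 xs).const_mul (-(lam * (lam * rho - mu ^ 2)) / (lam * rho + mu ^ 2))
        simpa using this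
      exact hder.congr_of_eventuallyEq heq
    · rw [hxs]; field_simp
    · have h : 0 ≤ lam * rho - 2 * mu ^ 2 := by nlinarith
      rw [hxs]
      have hne : lam ≠ 0 := ne_of_gt hlam
      field_simp
      nlinarith [mul_nonneg (mul_nonneg (mul_nonneg hmu.le hR.le) hlam.le) h]
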